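/- Let X be a pointed metric space, Y a real Banach space, 1 < p < ∞ with conjugate exponent p*, and T : X → Y a Lipschitz map with T(0) = 0. Then T is Lipschitz-Cohen strongly p-summing if and only if the bounded linear operator T^# : Y* → X^# defined by T^#(y*) = y* ∘ T is p*-summing. -/

import Mathlib

/-!
STATEMENT 16: `T : X → Y` is Lipschitz-Cohen strongly `p`-summing iff the bounded
linear operator `T^# : Y* → X^#`, `T^#(y*) = y* ∘ T`, is `p*`-summing.  Here `X^#` is
the space of Lipschitz functions `X → ℝ` vanishing at the base point, normed by the
Lipschitz constant, so the `p*`-summing property of `T^#` is expressed through the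
Lipschitz constants `Lip(y* ∘ T)` and the unit ball of `(Y*)* = Y**`.
-/

open scoped BigOperators NNReal

noncomputable section

/-- The (least) Lipschitz constant, i.e. the norm in `X^#`. -/
def lipConst {α : Type*} {β : Type*} [PseudoMetricSpace α] [PseudoMetricSpace β]
    (g : α → β) : ℝ≥0 :=
  sInf {K : ℝ≥0 | LipschitzWith K g}

/-- `sup_{g ∈ B_{Y*}} (Σ_i |g(y_i)|^q)^{1/q}`. -/
def dualBallSup {Y : Type*} [NormedAddCommGroup Y] [NormedSpace ℝ Y]
    (q : ℝ) {n : ℕ} (y : Fin n → Y) : ℝ :=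
  ⨆ g : {g : Y →L[ℝ] ℝ // ‖g‖ ≤ 1}, (∑ i, |g.1 (y i)| ^ q) ^ (1 / q)

/-- `T` is Lipschitz-Cohen strongly `p`-summing with constant `C` (`q = p*`). -/
def LipCohenCond {X : Type*} [MetricSpace X] {Y : Type*} [NormedAddCommGroup Y]
    [NormedSpace ℝ Y] (p q : ℝ) (T : X → Y) (C : ℝ) : Prop :=
  ∀ (n : ℕ) (x x' : Fin n → X) (ys : Fin n → (Y →L[ℝ] ℝ)) (lam : Fin n → ℝ),
    (∀ i, 0 < lam i) →
    ∑ i, lam i * |ys i (T (x i)) - ys i (T (x' i))| ≤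
      C * (∑ i, lam i ^ p * dist (x i) (x' i) ^ p) ^ (1 / p) * dualBallSup q ys

/-- The operator `T^# : Y* → X^#`, `y* ↦ y* ∘ T`, is `q`-summing with constant `C`:
`(Σ_i ‖y_i* ∘ T‖_{X^#}^q)^{1/q} ≤ C · sup_{y** ∈ B_{Y**}} (Σ_i |y**(y_i*)|^q)^{1/q}`,
where the norm of `y* ∘ T` in `X^#` is its Lipschitz constant. -/
def SharpPSummingCond {X : Type*} [MetricSpace X] {Y : Type*} [NormedAddCommGroup Y]
    [NormedSpace ℝ Y] (q : ℝ) (T : X → Y) (C : ℝ) : Prop :=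
  ∀ (n : ℕ) (ys : Fin n → (Y →L[ℝ] ℝ)),
    (∑ i, (lipConst (fun x => ys i (T x)) : ℝ) ^ q) ^ (1 / q) ≤ C * dualBallSup q ys

lemma lipConst_le {α β : Type*} [PseudoMetricSpace α] [PseudoMetricSpace β]
    {g : α → β} {K : ℝ≥0} (h : LipschitzWith K g) : lipConst g ≤ K :=
  csInf_le (OrderBot.bddBelow _) h

lemma lipConst_lipschitz {α β : Type*} [PseudoMetricSpace α] [PseudoMetricSpace β]
    {g : α → β} (h : ∃ K, LipschitzWith K g) : LipschitzWith (lipConst g) g := by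
  apply LipschitzWith.of_dist_le_mul
  intro x y
  rcases le_or_gt (dist x y) 0 with hd | hd
  · obtain ⟨K, hK⟩ := h
    have := hK.dist_le_mul x y
    have hd0 : dist x y = 0 := le_antisymm hd dist_nonneg
    rw [hd0] at this ⊢
    simpa using this
  · rw [← div_le_iff₀ hd] at *
    have hr : (dist (g x) (g y) / dist x y).toNNReal ≤ lipConst g := by
      apply le_csInf h
      intro K hK
      rw [← NNReal.coe_le_coe, Real.coe_toNNReal _ (div_nonneg dist_nonneg hd.le)]
      rw [div_le_iff₀ hd]
      exact LipschitzWith.dist_le_mul hK x y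
    calc dist (g x) (g y) / dist x y = (dist (g x) (g y) / dist x y).toNNReal := by
          rw [Real.coe_toNNReal _ (div_nonneg dist_nonneg hd.le)]
      _ ≤ (lipConst g : ℝ) := NNReal.coe_le_coe.2 hr

lemma exists_pair {α : Type*} [MetricSpace α] {g : α → ℝ} {c : ℝ} (hc : 0 ≤ c)
    (h : c < (lipConst g : ℝ)) : ∃ u v, c * dist u v < |g u - g v| ∧ 0 < dist u v := by
  have hnot : ¬ LipschitzWith c.toNNReal g := by
    intro hl
    have := lipConst_le hl
    rw [← NNReal.coe_le_coe, Real.coe_toNNReal _ hc] at this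
    exact absurd h (not_lt.2 this)
  rw [lipschitzWith_iff_dist_le_mul] at hnot
  push_neg at hnot
  obtain ⟨u, v, huv⟩ := hnot
  rw [Real.coe_toNNReal _ hc, Real.dist_eq] at huv
  refine ⟨u, v, huv, ?_⟩
  rcases eq_or_lt_of_le (dist_nonneg : (0:ℝ) ≤ dist u v) with hd | hd
  · exfalso
    have huv' : u = v := by rwa [eq_comm, dist_eq_zero] at hd
    rw [huv'] at huv
    simp at huv
  · exact hd

lemma dualBallSup_bddAbove {Y : Type*} [NormedAddCommGroup Y] [NormedSpace ℝ Y]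
    (q : ℝ) (hq : 0 < q) {n : ℕ} (y : Fin n → Y) :
    BddAbove (Set.range fun g : {g : Y →L[ℝ] ℝ // ‖g‖ ≤ 1} =>
      (∑ i, |g.1 (y i)| ^ q) ^ (1 / q)) := by
  refine ⟨(∑ i, ‖y i‖ ^ q) ^ (1 / q), ?_⟩
  rintro _ ⟨g, rfl⟩
  apply Real.rpow_le_rpow (Finset.sum_nonneg fun i _ => Real.rpow_nonneg (abs_nonneg _) _)
    _ (by positivity)
  apply Finset.sum_le_sum
  intro i _
  apply Real.rpow_le_rpow (abs_nonneg _) _ hq.le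
  calc |g.1 (y i)| ≤ ‖g.1‖ * ‖y i‖ := (g.1.le_opNorm (y i))
    _ ≤ 1 * ‖y i‖ := by gcongr; exact g.2
    _ = ‖y i‖ := one_mul _

lemma dualBallSup_nonneg {Y : Type*} [NormedAddCommGroup Y] [NormedSpace ℝ Y]
    {q : ℝ} (hq : 0 < q) {n : ℕ} (y : Fin n → Y) : 0 ≤ dualBallSup q y := by
  have h := le_ciSup (dualBallSup_bddAbove q hq y) ⟨0, by simp⟩
  have h0 : ((∑ i : Fin n, |(0 : Y →L[ℝ] ℝ) (y i)| ^ q) ^ (1/q) : ℝ) = 0 := by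
    simp [Real.zero_rpow hq.ne', Real.zero_rpow (inv_ne_zero hq.ne')]
  rw [dualBallSup]
  rw [h0] at h
  exact h


lemma easy_dir {X : Type*} [MetricSpace X] {Y : Type*} [NormedAddCommGroup Y]
    [NormedSpace ℝ Y] {p q : ℝ} (hp : 1 < p) (hpq : 1 / p + 1 / q = 1)
    {T : X → Y} {K : ℝ≥0} (hT : LipschitzWith K T)
    {C : ℝ} (hSharp : SharpPSummingCond q T C) : LipCohenCond p q T C := by
  have hpq' : Real.HolderConjugate p q := Real.holderConjugate_iff.mpr ⟨hp, by simpa [one_div] using hpq⟩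
  intro n x x' ys lam hlam
  set L : Fin n → ℝ := fun i => (lipConst (fun z => ys i (T z)) : ℝ) with hL
  have hLnn : ∀ i, 0 ≤ L i := fun i => NNReal.coe_nonneg _
  have hlip : ∀ i, LipschitzWith (lipConst (fun z => ys i (T z))) (fun z => ys i (T z)) :=
    fun i => lipConst_lipschitz ⟨‖ys i‖₊ * K, ((ys i).lipschitz.comp hT : _)⟩
  have step1 : ∑ i, lam i * |ys i (T (x i)) - ys i (T (x' i))| ≤
      ∑ i, (lam i * dist (x i) (x' i)) * L i := by
    apply Finset.sum_le_sum
    intro i _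
    have := LipschitzWith.dist_le_mul (hlip i) (x i) (x' i)
    rw [Real.dist_eq] at this
    calc lam i * |ys i (T (x i)) - ys i (T (x' i))| ≤ lam i * (L i * dist (x i) (x' i)) :=
          mul_le_mul_of_nonneg_left this (hlam i).le
      _ = (lam i * dist (x i) (x' i)) * L i := by ring
  have step2 : ∑ i, (lam i * dist (x i) (x' i)) * L i ≤
      (∑ i, (lam i * dist (x i) (x' i)) ^ p) ^ (1/p) * (∑ i, L i ^ q) ^ (1/q) :=
    Real.inner_le_Lp_mul_Lq_of_nonneg _ hpq'
      (fun i _ => mul_nonneg (hlam i).le dist_nonneg) (fun i _ => hLnn i)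
  have hsum : (∑ i, (lam i * dist (x i) (x' i)) ^ p) =
      ∑ i, lam i ^ p * dist (x i) (x' i) ^ p := by
    refine Finset.sum_congr rfl fun i _ => ?_
    exact Real.mul_rpow (hlam i).le dist_nonneg
  have hB : (∑ i, L i ^ q) ^ (1/q) ≤ C * dualBallSup q ys := hSharp n ys
  have hA : 0 ≤ (∑ i, (lam i * dist (x i) (x' i)) ^ p) ^ (1/p) :=
    Real.rpow_nonneg (Finset.sum_nonneg fun i _ =>
      Real.rpow_nonneg (mul_nonneg (hlam i).le dist_nonneg) _) _
  calc ∑ i, lam i * |ys i (T (x i)) - ys i (T (x' i))|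
      ≤ (∑ i, (lam i * dist (x i) (x' i)) ^ p) ^ (1/p) * (∑ i, L i ^ q) ^ (1/q) :=
        step1.trans step2
    _ ≤ (∑ i, (lam i * dist (x i) (x' i)) ^ p) ^ (1/p) * (C * dualBallSup q ys) :=
        mul_le_mul_of_nonneg_left hB hA
    _ = C * (∑ i, lam i ^ p * dist (x i) (x' i) ^ p) ^ (1/p) * dualBallSup q ys := by
        rw [← hsum]; ring

lemma hard_dir {X : Type*} [MetricSpace X] (x0 : X) {Y : Type*} [NormedAddCommGroup Y]
    [NormedSpace ℝ Y] {p q : ℝ} (hp : 1 < p) (hpq : 1 / p + 1 / q = 1)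
    {T : X → Y} {C : ℝ} (hC : 0 < C) (h : LipCohenCond p q T C) :
    SharpPSummingCond q T C := by
  have hpq' : Real.HolderConjugate p q := Real.holderConjugate_iff.mpr ⟨hp, by simpa [one_div] using hpq⟩
  have hq0 : 0 < q := hpq'.symm.pos
  have hp0 : 0 < p := hpq'.pos
  have hqp : (q - 1) * p = q := hpq'.symm.sub_one_mul_conj
  intro n ys
  set L : Fin n → ℝ := fun i => (lipConst (fun x => ys i (T x)) : ℝ) with hLdef
  set S := dualBallSup q ys with hSdef
  have hS0 : 0 ≤ S := dualBallSup_nonneg hq0 _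
  -- key claim for truncated b
  have key : ∀ ε : ℝ, 0 < ε →
      (∑ i, (max (L i - ε) 0) ^ q) ^ (1/q) ≤ C * S := by
    intro ε hε
    set b : Fin n → ℝ := fun i => max (L i - ε) 0 with hbdef
    have hbnn : ∀ i, 0 ≤ b i := fun i => le_max_right _ _
    have claim : ∀ i, ∃ (u v : X) (lam : ℝ), 0 < lam ∧
        b i ^ q ≤ lam * |ys i (T u) - ys i (T v)| ∧
        lam ^ p * dist u v ^ p ≤ b i ^ q := by
      intro i
      by_cases hbi : 0 < b i
      · have hblt : b i < L i := by
          have h1 : L i - ε > 0 := by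
            by_contra hcon
            push_neg at hcon
            have : b i = 0 := max_eq_right hcon
            rw [this] at hbi; exact lt_irrefl _ hbi
          have hbe : b i = L i - ε := max_eq_left h1.le
          rw [hbe]; linarith
        obtain ⟨u, v, hlt, hd⟩ := exists_pair hbi.le hblt
        refine ⟨u, v, b i ^ (q - 1) / dist u v,
          div_pos (Real.rpow_pos_of_pos hbi _) hd, ?_, ?_⟩
        · have hbq : b i ^ q = b i ^ (q-1) * b i := by
            rw [← Real.rpow_add_one (ne_of_gt hbi) (q-1)]
            ring_nf
          have h1 : b i ^ (q-1) / dist u v * (b i * dist u v) = b i ^ q := by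
            rw [div_mul_eq_mul_div, div_eq_iff hd.ne', hbq]
            ring
          calc b i ^ q = b i ^ (q-1) / dist u v * (b i * dist u v) := h1.symm
            _ ≤ b i ^ (q-1) / dist u v * |ys i (T u) - ys i (T v)| := by
                apply mul_le_mul_of_nonneg_left hlt.le
                exact (div_pos (Real.rpow_pos_of_pos hbi _) hd).le
        · have hlam0 : (0:ℝ) ≤ b i ^ (q-1) / dist u v :=
            (div_pos (Real.rpow_pos_of_pos hbi _) hd).le
          rw [← Real.mul_rpow hlam0 dist_nonneg, div_mul_cancel₀ _ hd.ne',
            ← Real.rpow_mul (hbnn i), hqp]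
      · have hb0 : b i = 0 := by
          rcases (hbnn i).lt_or_eq with h' | h'
          · exact absurd h' hbi
          · exact h'.symm
        refine ⟨x0, x0, 1, one_pos, ?_, ?_⟩
        · simp [hb0, Real.zero_rpow hq0.ne']
        · simp [hb0, Real.zero_rpow hq0.ne', Real.zero_rpow hp0.ne', Real.one_rpow]
    choose u v lam hlam h2 h3 using claim
    set t := ∑ i, b i ^ q with htdef
    have ht0 : 0 ≤ t := Finset.sum_nonneg fun i _ => Real.rpow_nonneg (hbnn i) _
    have hmain : t ≤ C * t ^ (1/p) * S := by
      calc t ≤ ∑ i, lam i * |ys i (T (u i)) - ys i (T (v i))| :=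
            Finset.sum_le_sum fun i _ => h2 i
        _ ≤ C * (∑ i, lam i ^ p * dist (u i) (v i) ^ p) ^ (1/p) * S :=
            h n u v ys lam hlam
        _ ≤ C * t ^ (1/p) * S := by
            have hmono : (∑ i, lam i ^ p * dist (u i) (v i) ^ p) ^ (1/p) ≤ t ^ (1/p) :=
              Real.rpow_le_rpow (Finset.sum_nonneg fun i _ =>
                  mul_nonneg (Real.rpow_nonneg (hlam i).le _) (Real.rpow_nonneg dist_nonneg _))
                (Finset.sum_le_sum fun i _ => h3 i) (by positivity)
            exact mul_le_mul_of_nonneg_right (mul_le_mul_of_nonneg_left hmono hC.le) hS0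
    rcases ht0.lt_or_eq with ht | ht
    · have hrp : 0 < t ^ (1/p) := Real.rpow_pos_of_pos ht _
      have hsplit : t = t ^ (1/q) * t ^ (1/p) := by
        rw [← Real.rpow_add ht, add_comm, hpq, Real.rpow_one]
      have : t ^ (1/q) * t ^ (1/p) ≤ (C * S) * t ^ (1/p) := by
        rw [← hsplit]
        calc t ≤ C * t ^ (1/p) * S := hmain
          _ = (C * S) * t ^ (1/p) := by ring
      exact le_of_mul_le_mul_right this hrp
    · rw [← ht, Real.zero_rpow (by positivity : (1/q) ≠ 0)]
      exact mul_nonneg hC.le hS0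
  -- now ε → 0
  have hq1 : 1 ≤ q := hpq'.symm.lt.le
  have hLnn : ∀ i, 0 ≤ L i := fun i => NNReal.coe_nonneg _
  apply le_of_forall_pos_le_add
  intro δ hδ
  set A := ((n:ℝ)) ^ (1/q) with hAdef
  have hA0 : 0 ≤ A := Real.rpow_nonneg (Nat.cast_nonneg _) _
  set ε := δ / (A + 1) with hεdef
  have hε : 0 < ε := div_pos hδ (by linarith)
  have hstep : (∑ i : Fin n, L i ^ q) ^ (1/q) ≤
      (∑ i : Fin n, (max (L i - ε) 0) ^ q) ^ (1/q) + (∑ i : Fin n, ε ^ q) ^ (1/q) := by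
    have hmink := Real.Lp_add_le_of_nonneg (f := fun i => max (L i - ε) 0)
      (g := fun i => ε) (s := (Finset.univ : Finset (Fin n))) hq1
      (fun i _ => le_max_right _ _) (fun i _ => hε.le)
    refine le_trans ?_ hmink
    apply Real.rpow_le_rpow (Finset.sum_nonneg fun i _ => Real.rpow_nonneg (hLnn i) _)
      _ (by positivity)
    apply Finset.sum_le_sum
    intro i _
    apply Real.rpow_le_rpow (hLnn i) _ hq0.le
    have : L i - ε ≤ max (L i - ε) 0 := le_max_left _ _
    linarith
  have hεq : (ε ^ q) ^ (1/q) = ε := by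
    rw [one_div, Real.rpow_rpow_inv hε.le hq0.ne']
  have hconst : (∑ i : Fin n, ε ^ q) ^ (1/q) = A * ε := by
    rw [Finset.sum_const, Finset.card_univ, Fintype.card_fin, nsmul_eq_mul,
      Real.mul_rpow (Nat.cast_nonneg _) (Real.rpow_nonneg hε.le _), hεq, hAdef]
  have hfin : A * ε ≤ δ := by
    rw [hεdef, mul_div_assoc', div_le_iff₀ (by linarith : (0:ℝ) < A + 1)]
    nlinarith
  show (∑ i : Fin n, L i ^ q) ^ (1/q) ≤ C * S + δ
  calc (∑ i : Fin n, L i ^ q) ^ (1/q)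
      ≤ (∑ i : Fin n, (max (L i - ε) 0) ^ q) ^ (1/q) + A * ε := by
        rw [← hconst]; exact hstep
    _ ≤ C * S + A * ε := by gcongr; exact key ε hε
    _ ≤ C * S + δ := by gcongr

/-- `T` is Lipschitz-Cohen strongly `p`-summing iff
`T^# : Y* → X^#` is `p*`-summing. -/
theorem lipCohen_iff_sharp_pSumming {X : Type*} [MetricSpace X] (x0 : X)
    {Y : Type*} [NormedAddCommGroup Y] [NormedSpace ℝ Y] [CompleteSpace Y]
    (p q : ℝ) (hp : 1 < p) (hpq : 1 / p + 1 / q = 1)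
    (T : X → Y) (K : ℝ≥0) (hT : LipschitzWith K T) (hT0 : T x0 = 0) :
    (∃ C > 0, LipCohenCond p q T C) ↔ (∃ C > 0, SharpPSummingCond q T C) := by
  constructor
  · rintro ⟨C, hC, hcond⟩
    exact ⟨C, hC, hard_dir x0 hp hpq hC hcond⟩
  · rintro ⟨C, hC, hcond⟩
    exact ⟨C, hC, easy_dir hp hpq hT hcond⟩

end
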